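/- Let R = ((ℓ_1,…,ℓ_d),(u_1,…,u_{d+1})) be a constructible special point data of level d with q nodes, with u_1, …, u_{d+1} listed in increasing lexicographic order, and let c be a rational number. Define b_j := ⌈(|a_{u_j}(R)| + c)/q − 1/2⌉ for j = 1,…,d+1. Then for every node label ℓ ∈ {1,…,q} and all j₁, j₂ ∈ {1,…,d+1} one has |(a^ℓ_{u_{j₁}}(R) − b_{j₁}) − (a^ℓ_{u_{j₂}}(R) − b_{j₂})| ≤ 1. -/
import Mathlib


/-- The relation `u <_ℓ u'` on `{1,2}^d`, relative to node labels `lab : Fin d → ℕ`. -/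
def ltNode {d : ℕ} (lab : Fin d → ℕ) (ℓ : ℕ) (u u' : Fin d → ℕ) : Prop :=
  (∃ k₀ : Fin d, lab k₀ = ℓ ∧ u k₀ = 2 ∧ u' k₀ = 1 ∧
      ∀ k : Fin d, k₀ < k → lab k = ℓ → u k = u' k) ∨
  ((∀ k : Fin d, lab k = ℓ → u k = u' k) ∧
    ∃ k₀ : Fin d, lab k₀ ≠ ℓ ∧ u k₀ = 1 ∧ u' k₀ = 2 ∧
      ∀ k : Fin d, k < k₀ → u k = u' k)

/-- Constructible special point data of level `d` with `q` nodes. -/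
inductive Constructible (q : ℕ) :
    (d : ℕ) → (Fin d → ℕ) → (Fin (d + 1) → Fin d → ℕ) → Prop
  | base (ℓ : ℕ) (h1 : 1 ≤ ℓ) (hq : ℓ ≤ q) :
      Constructible q 1 (fun _ => ℓ) ![![1], ![2]]
  | step {d : ℕ} {lab : Fin d → ℕ} {u : Fin (d + 1) → Fin d → ℕ}
      (hR : Constructible q d lab u) (ℓ : ℕ) (h1 : 1 ≤ ℓ) (hq : ℓ ≤ q)
      (v : Fin (d + 1) → Fin d → ℕ) (σ : Equiv.Perm (Fin (d + 1)))
      (hv : ∀ j, v j = u (σ j))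
      (hsort : ∀ i j : Fin (d + 1), i < j → ltNode lab ℓ (v i) (v j))
      (h : ℕ) (hh1 : 1 ≤ h) (hh2 : h ≤ d + 1) :
      Constructible q (d + 1) (Fin.snoc lab ℓ)
        (fun j : Fin (d + 2) =>
          if hj : (j : ℕ) < h then Fin.snoc (v ⟨(j : ℕ), by omega⟩) 1
          else Fin.snoc (v ⟨(j : ℕ) - 1, by omega⟩) 2)

/-- `a^ℓ_u(R)`: the number of `k` with `ℓ_k = ℓ` and `u(k) = 2`. -/
def aCount {d : ℕ} (lab : Fin d → ℕ) (ℓ : ℕ) (u : Fin d → ℕ) : ℕ :=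
  (Finset.univ.filter (fun k : Fin d => lab k = ℓ ∧ u k = 2)).card

/-- `|a_u(R)|`: the number of `k` with `u(k) = 2`. -/
def aTot {d : ℕ} (u : Fin d → ℕ) : ℕ :=
  (Finset.univ.filter (fun k : Fin d => u k = 2)).card

/-- Lexicographic order on tuples, comparing at the smallest coordinate where they differ. -/
def lexLt {d : ℕ} (u u' : Fin d → ℕ) : Prop :=
  ∃ k₀ : Fin d, (∀ k : Fin d, k < k₀ → u k = u' k) ∧ u k₀ < u' k₀

lemma aCount_snoc {d : ℕ} (lab : Fin d → ℕ) (ℓ ℓ' : ℕ) (x : Fin d → ℕ) (e : ℕ) :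
    aCount (Fin.snoc lab ℓ) ℓ' (Fin.snoc x e) =
      aCount lab ℓ' x + (if ℓ = ℓ' ∧ e = 2 then 1 else 0) := by
  simp only [aCount, Finset.card_filter]
  rw [Fin.sum_univ_castSucc]
  simp [Fin.snoc_castSucc, Fin.snoc_last]

lemma aTot_snoc {d : ℕ} (x : Fin d → ℕ) (e : ℕ) :
    aTot (Fin.snoc x e) = aTot x + (if e = 2 then 1 else 0) := by
  simp only [aTot, Finset.card_filter]
  rw [Fin.sum_univ_castSucc]
  simp [Fin.snoc_castSucc, Fin.snoc_last]

lemma ltNode_irrefl {d : ℕ} (lab : Fin d → ℕ) (ℓ : ℕ) (x : Fin d → ℕ) :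
    ¬ ltNode lab ℓ x x := by
  rintro (⟨k₀, _, h2, h1, _⟩ | ⟨_, k₀, _, h1, h2, _⟩) <;> omega

lemma aCount_out {q d : ℕ} {lab : Fin d → ℕ} (hlab : ∀ k, 1 ≤ lab k ∧ lab k ≤ q)
    {ℓ : ℕ} (hℓ : ℓ ∉ Finset.Icc 1 q) (x : Fin d → ℕ) : aCount lab ℓ x = 0 := by
  rw [aCount, Finset.card_eq_zero, Finset.filter_eq_empty_iff]
  rintro k - ⟨hk, -⟩
  exact hℓ (by simp [Finset.mem_Icc, ← hk, hlab k])

lemma aTot_eq_sum {q d : ℕ} {lab : Fin d → ℕ} (hlab : ∀ k, 1 ≤ lab k ∧ lab k ≤ q)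
    (x : Fin d → ℕ) : aTot x = ∑ ℓ ∈ Finset.Icc 1 q, aCount lab ℓ x := by
  simp only [aTot, aCount, Finset.card_filter]
  rw [Finset.sum_comm]
  refine Finset.sum_congr rfl fun k _ => ?_
  by_cases hx : x k = 2
  · simp only [hx, and_true, if_true]
    rw [Finset.sum_ite_eq (Finset.Icc 1 q) (lab k) (fun _ => 1)]
    simp [Finset.mem_Icc, hlab k]
  · simp [hx]

lemma ltNode_snoc {d : ℕ} {lab : Fin d → ℕ} {ℓ ℓ'' : ℕ} {x y : Fin d → ℕ} {e f : ℕ}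
    (H : ltNode (Fin.snoc lab ℓ) ℓ'' (Fin.snoc x e) (Fin.snoc y f)) :
    (ℓ = ℓ'' ∧ e = 2 ∧ f = 1) ∨ (ℓ ≠ ℓ'' ∧ x = y ∧ e = 1 ∧ f = 2) ∨
      ((ℓ = ℓ'' → e = f) ∧ ltNode lab ℓ'' x y) := by
  have hle : ∀ (m : Fin d), (m.castSucc : Fin (d+1)) < Fin.last d := fun m => Fin.castSucc_lt_last m
  rcases H with ⟨k₀, hl, h2, h1, hafter⟩ | ⟨hall, k₀, hl, h1, h2, hbefore⟩
  · rcases Fin.eq_castSucc_or_eq_last k₀ with ⟨m, rfl⟩ | rfl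
    · refine Or.inr (Or.inr ⟨?_, Or.inl ⟨m, ?_, ?_, ?_, ?_⟩⟩)
      · intro hll
        have := hafter (Fin.last d) (hle m) (by simpa using hll)
        simpa using this
      · simpa using hl
      · simpa using h2
      · simpa using h1
      · intro k hk hlk
        have := hafter k.castSucc (by simpa [Fin.castSucc_lt_castSucc_iff] using hk)
          (by simpa using hlk)
        simpa using this
    · refine Or.inl ⟨by simpa using hl, by simpa using h2, by simpa using h1⟩
  · rcases Fin.eq_castSucc_or_eq_last k₀ with ⟨m, rfl⟩ | rfl
    · refine Or.inr (Or.inr ⟨?_, Or.inr ⟨?_, m, ?_, ?_, ?_, ?_⟩⟩)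
      · intro hll
        have := hall (Fin.last d) (by simpa using hll)
        simpa using this
      · intro k hlk
        have := hall k.castSucc (by simpa using hlk)
        simpa using this
      · simpa using hl
      · simpa using h1
      · simpa using h2
      · intro k hk
        have := hbefore k.castSucc (by simpa [Fin.castSucc_lt_castSucc_iff] using hk)
        simpa using this
    · refine Or.inr (Or.inl ⟨by simpa using hl, ?_, by simpa using h1,
        by simpa using h2⟩)
      · funext k
        have := hbefore k.castSucc (hle k)
        simpa using this

structure SPInv (q d : ℕ) (lab : Fin d → ℕ) (u : Fin (d + 1) → Fin d → ℕ) : Prop where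
  labRange : ∀ k, 1 ≤ lab k ∧ lab k ≤ q
  hA : ∀ i j ℓ', aCount lab ℓ' (u j) ≤ aCount lab ℓ' (u i) + 1
  hB : ∀ i j ℓ' ℓ'', aCount lab ℓ' (u i) < aCount lab ℓ' (u j) →
        aCount lab ℓ'' (u i) ≤ aCount lab ℓ'' (u j)
  hP3 : ∀ i j ℓ', ltNode lab ℓ' (u i) (u j) →
        aCount lab ℓ' (u j) ≤ aCount lab ℓ' (u i) ∧
          aCount lab ℓ' (u i) ≤ aCount lab ℓ' (u j) + 1
  hP4 : ∀ i j ℓ' ℓ'', ltNode lab ℓ' (u i) (u j) → ltNode lab ℓ'' (u j) (u i) →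
        aCount lab ℓ' (u i) = aCount lab ℓ' (u j) →
        aCount lab ℓ'' (u i) = aCount lab ℓ'' (u j) → False
  hP5 : ∀ i j ℓ', ltNode lab ℓ' (u i) (u j) →
        aCount lab ℓ' (u i) = aCount lab ℓ' (u j) → aTot (u i) ≤ aTot (u j)

lemma SPInv.tot_lt {q d : ℕ} {lab : Fin d → ℕ} {u : Fin (d + 1) → Fin d → ℕ}
    (hI : SPInv q d lab u) {i j : Fin (d + 1)} {ℓ' : ℕ}
    (hs : aCount lab ℓ' (u i) < aCount lab ℓ' (u j)) : aTot (u i) < aTot (u j) := by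
  have hin : ℓ' ∈ Finset.Icc 1 q := by
    by_contra hc
    rw [aCount_out hI.labRange hc, aCount_out hI.labRange hc] at hs
    omega
  rw [aTot_eq_sum hI.labRange, aTot_eq_sum hI.labRange]
  exact Finset.sum_lt_sum (fun ℓ'' _ => hI.hB i j ℓ' ℓ'' hs) ⟨ℓ', hin, hs⟩

lemma aCount_one (lab : Fin 1 → ℕ) (ℓ' : ℕ) (x : Fin 1 → ℕ) :
    aCount lab ℓ' x = if lab 0 = ℓ' ∧ x 0 = 2 then 1 else 0 := by
  simp only [aCount, Finset.card_filter, Fin.sum_univ_one]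

lemma aTot_one (x : Fin 1 → ℕ) : aTot x = if x 0 = 2 then 1 else 0 := by
  simp only [aTot, Finset.card_filter, Fin.sum_univ_one]

lemma ltNode_one {lab : Fin 1 → ℕ} {ℓ' : ℕ} {x y : Fin 1 → ℕ}
    (H : ltNode lab ℓ' x y) :
    (lab 0 = ℓ' ∧ x 0 = 2 ∧ y 0 = 1) ∨ (lab 0 ≠ ℓ' ∧ x 0 = 1 ∧ y 0 = 2) := by
  rcases H with ⟨k₀, hl, h2, h1, -⟩ | ⟨-, k₀, hl, h1, h2, -⟩ <;>
    rw [Fin.eq_zero k₀] at *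
  · exact Or.inl ⟨hl, h2, h1⟩
  · exact Or.inr ⟨hl, h1, h2⟩

lemma inv_base {q : ℕ} (ℓ₀ : ℕ) (h1 : 1 ≤ ℓ₀) (hq : ℓ₀ ≤ q) :
    SPInv q 1 (fun _ => ℓ₀) ![![1], ![2]] := by
  have hval : ∀ i : Fin 2, (![![1], ![2]] : Fin 2 → Fin 1 → ℕ) i 0 = 1 + (i : ℕ) := by
    intro i; fin_cases i <;> rfl
  have hac : ∀ (i : Fin 2) (ℓ' : ℕ),
      aCount (fun _ => ℓ₀) ℓ' ((![![1], ![2]] : Fin 2 → Fin 1 → ℕ) i) =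
        if ℓ₀ = ℓ' ∧ (i : ℕ) = 1 then 1 else 0 := by
    intro i ℓ'
    rw [aCount_one, hval i]
    fin_cases i <;> simp
  have hat : ∀ (i : Fin 2), aTot ((![![1], ![2]] : Fin 2 → Fin 1 → ℕ) i) = (i : ℕ) := by
    intro i
    rw [aTot_one, hval i]
    fin_cases i <;> simp
  have hlt : ∀ (i j : Fin 2) (ℓ' : ℕ),
      ltNode (fun _ => ℓ₀) ℓ' ((![![1], ![2]] : Fin 2 → Fin 1 → ℕ) i)
        ((![![1], ![2]] : Fin 2 → Fin 1 → ℕ) j) →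
      (ℓ₀ = ℓ' ∧ (i : ℕ) = 1 ∧ (j : ℕ) = 0) ∨ (ℓ₀ ≠ ℓ' ∧ (i : ℕ) = 0 ∧ (j : ℕ) = 1) := by
    intro i j ℓ' H
    rcases ltNode_one H with ⟨ha, hb, hc⟩ | ⟨ha, hb, hc⟩
    · rw [hval i] at hb; rw [hval j] at hc
      exact Or.inl ⟨ha, by omega, by omega⟩
    · rw [hval i] at hb; rw [hval j] at hc
      exact Or.inr ⟨ha, by omega, by omega⟩
  refine ⟨fun _ => ⟨h1, hq⟩, ?_, ?_, ?_, ?_, ?_⟩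
  · intro i j ℓ'; rw [hac, hac]; split_ifs <;> omega
  · intro i j ℓ' ℓ''; rw [hac, hac, hac, hac]; split_ifs <;> omega
  · intro i j ℓ' H
    rcases hlt i j ℓ' H with ⟨ha, hb, hc⟩ | ⟨ha, hb, hc⟩ <;>
      rw [hac, hac] <;> split_ifs <;> omega
  · intro i j ℓ' ℓ'' H1 H2 t1 t2
    rw [hac, hac] at t1 t2
    rcases hlt i j ℓ' H1 with ⟨ha, hb, hc⟩ | ⟨ha, hb, hc⟩ <;>
      [skip; skip] <;> rcases hlt j i ℓ'' H2 with ⟨ha', hb', hc'⟩ | ⟨ha', hb', hc'⟩ <;>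
      split_ifs at t1 t2 <;> simp_all <;> omega
  · intro i j ℓ' H t
    rw [hac, hac] at t
    rw [hat, hat]
    rcases hlt i j ℓ' H with ⟨ha, hb, hc⟩ | ⟨ha, hb, hc⟩ <;>
      split_ifs at t <;> simp_all <;> omega

lemma inv_step {q d : ℕ} {lab : Fin d → ℕ} {v : Fin (d + 1) → Fin d → ℕ}
    (hI : SPInv q d lab v) {ℓ : ℕ} (h1 : 1 ≤ ℓ) (hq : ℓ ≤ q)
    (hsort : ∀ i j : Fin (d + 1), i < j → ltNode lab ℓ (v i) (v j))
    (h : ℕ)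
    (w : Fin (d + 2) → Fin (d + 1) → ℕ)
    (hw : ∀ j : Fin (d + 2), ∃ (i : Fin (d + 1)) (e : ℕ),
      w j = Fin.snoc (v i) e ∧ (e = 1 ∨ e = 2) ∧
        (e = 1 → (i : ℕ) < h) ∧ (e = 2 → h ≤ (i : ℕ) + 1)) :
    SPInv q (d + 1) (Fin.snoc lab ℓ) w := by
  -- sorted order facts
  have hs : ∀ {i j : Fin (d + 1)}, (i : ℕ) < (j : ℕ) → ltNode lab ℓ (v i) (v j) := by
    intro i j hij; exact hsort i j (by rwa [Fin.lt_def])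
  have heq : ∀ {i j : Fin (d + 1)}, (i : ℕ) = (j : ℕ) → v i = v j := by
    intro i j hij; rw [Fin.ext hij]
  refine ⟨?_, ?_, ?_, ?_, ?_, ?_⟩
  · -- labRange
    intro k
    rcases Fin.eq_castSucc_or_eq_last k with ⟨m, rfl⟩ | rfl
    · simpa using hI.labRange m
    · simpa using ⟨h1, hq⟩
  · -- A
    intro J1 J2 ℓ''
    obtain ⟨i1, e1, hw1, he1, hl1, hh1⟩ := hw J1
    obtain ⟨i2, e2, hw2, he2, hl2, hh2⟩ := hw J2
    rw [hw1, hw2, aCount_snoc, aCount_snoc]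
    have base := hI.hA i1 i2 ℓ''
    by_cases hc2 : ℓ = ℓ'' ∧ e2 = 2
    · by_cases hc1 : ℓ = ℓ'' ∧ e1 = 2
      · simp only [if_pos hc1, if_pos hc2]; omega
      · simp only [if_pos hc2, if_neg hc1]
        have he1' : e1 = 1 := by
          rcases he1 with h' | h'
          exacts [h', absurd ⟨hc2.1, h'⟩ hc1]
        have hle : (i1 : ℕ) ≤ (i2 : ℕ) := by
          have := hl1 he1'; have := hh2 hc2.2; omega
        rcases eq_or_lt_of_le hle with hE | hL
        · rw [heq hE]
        · have := (hI.hP3 i1 i2 ℓ (hs hL)).1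
          rw [← hc2.1]; omega
    · simp only [if_neg hc2]; split_ifs <;> omega
  · -- B
    intro J1 J2 ℓ' ℓ'' hyp
    obtain ⟨i1, e1, hw1, he1, hl1, hh1⟩ := hw J1
    obtain ⟨i2, e2, hw2, he2, hl2, hh2⟩ := hw J2
    rw [hw1, hw2, aCount_snoc, aCount_snoc] at hyp ⊢
    by_cases hll' : ℓ = ℓ'
    · -- hypothesis label is ℓ
      by_cases hstrict : aCount lab ℓ' (v i1) < aCount lab ℓ' (v i2)
      · by_cases hll'' : ℓ = ℓ''
        · have hee : ℓ' = ℓ'' := by rw [← hll', ← hll'']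
          rw [← hee]
          exact le_of_lt hyp
        · rw [if_neg (fun hcc : ℓ = ℓ'' ∧ e1 = 2 => hll'' hcc.1),
              if_neg (fun hcc : ℓ = ℓ'' ∧ e2 = 2 => hll'' hcc.1)]
          have := hI.hB i1 i2 ℓ' ℓ'' hstrict
          omega
      · -- tie at ℓ, forced e1 = 1, e2 = 2
        push_neg at hstrict
        have he2' : e2 = 2 := by
          by_contra hne
          rw [if_neg (fun hcc : ℓ = ℓ' ∧ e2 = 2 => hne hcc.2)] at hyp
          have hch1 : (if ℓ = ℓ' ∧ e1 = 2 then 1 else 0) ≤ 1 := by split_ifs <;> omega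
          omega
        have he1' : e1 = 1 := by
          by_contra hne
          have h2' : e1 = 2 := by
            rcases he1 with h' | h'
            exacts [absurd h' hne, h']
          rw [if_pos ⟨hll', h2'⟩, if_pos ⟨hll', he2'⟩] at hyp
          omega
        rw [if_neg (fun hcc : ℓ = ℓ' ∧ e1 = 2 => by omega), if_pos ⟨hll', he2'⟩] at hyp
        have htie : aCount lab ℓ' (v i1) = aCount lab ℓ' (v i2) := by omega
        have hle12 : (i1 : ℕ) ≤ (i2 : ℕ) := by
          have := hl1 he1'; have := hh2 he2'; omega
        rw [if_neg (fun hcc : ℓ = ℓ'' ∧ e1 = 2 => by omega)]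
        rcases eq_or_lt_of_le hle12 with hE | hL
        · rw [heq hE]; split_ifs <;> omega
        · have hrel := hs hL
          have htie' : aCount lab ℓ (v i1) = aCount lab ℓ (v i2) := by rw [hll']; exact htie
          have hP5 := hI.hP5 i1 i2 ℓ hrel htie'
          by_cases hll'' : ℓ = ℓ''
          · rw [if_pos ⟨hll'', he2'⟩]
            have hee : ℓ' = ℓ'' := by rw [← hll', ← hll'']
            rw [← hee]
            omega
          · rw [if_neg (fun hcc : ℓ = ℓ'' ∧ e2 = 2 => hll'' hcc.1)]
            by_contra hgoal
            push_neg at hgoal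
            have := hI.tot_lt hgoal
            omega
    · -- ℓ ≠ ℓ' : χ' = 0 on both sides
      have hyp0 : aCount lab ℓ' (v i1) < aCount lab ℓ' (v i2) := by
        simp only [if_neg (fun hcc : ℓ = ℓ' ∧ e1 = 2 => hll' hcc.1),
          if_neg (fun hcc : ℓ = ℓ' ∧ e2 = 2 => hll' hcc.1)] at hyp
        omega
      have hBl := hI.hB i1 i2 ℓ' ℓ'' hyp0
      by_cases hc2 : ℓ = ℓ'' ∧ e2 = 2
      · simp only [if_pos hc2]; split_ifs <;> omega
      · simp only [if_neg hc2]
        by_cases hc1 : ℓ = ℓ'' ∧ e1 = 2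
        · simp only [if_pos hc1]
          -- e1 = 2, e2 ≠ 2 hence e2 = 1
          have he2' : e2 = 1 := by
            rcases he2 with h' | h'
            exacts [h', absurd ⟨hc1.1, h'⟩ hc2]
          have hle : (i2 : ℕ) ≤ (i1 : ℕ) := by
            have := hl2 he2'; have := hh1 hc1.2; omega
          rcases eq_or_lt_of_le hle with hE | hL
          · rw [heq hE] at hyp0; omega
          · -- v i2 <_ℓ v i1
            have hrel := hs hL
            by_cases htie : aCount lab ℓ (v i2) = aCount lab ℓ (v i1)
            · have := hI.hP5 i2 i1 ℓ hrel htie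
              have := hI.tot_lt hyp0
              omega
            · have := (hI.hP3 i2 i1 ℓ hrel).1
              have : aCount lab ℓ (v i1) < aCount lab ℓ (v i2) := by
                rw [← hc1.1] at hBl; omega
              rw [← hc1.1] at hBl ⊢; omega
        · simp only [if_neg hc1]; omega
  · -- P3
    intro J1 J2 ℓ' H
    obtain ⟨i1, e1, hw1, he1, hl1, hh1⟩ := hw J1
    obtain ⟨i2, e2, hw2, he2, hl2, hh2⟩ := hw J2
    rw [hw1, hw2] at H ⊢
    rw [aCount_snoc, aCount_snoc]
    rcases ltNode_snoc H with ⟨hll, hE1, hE2⟩ | ⟨hll, hxy, hE1, hE2⟩ | ⟨hef, hrel⟩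
    · -- case 1 : ℓ = ℓ', e1 = 2, e2 = 1
      rw [if_neg (fun hcc : ℓ = ℓ' ∧ e2 = 2 => by omega), if_pos (⟨hll, hE1⟩ : ℓ = ℓ' ∧ e1 = 2)]
      have hle : (i2 : ℕ) ≤ (i1 : ℕ) := by
        have := hl2 hE2; have := hh1 hE1; omega
      rcases eq_or_lt_of_le hle with hE | hL
      · rw [heq hE]; omega
      · have := hI.hP3 i2 i1 ℓ (hs hL)
        rw [← hll]; omega
    · -- case 2 : v i1 = v i2, e1 = 1, e2 = 2
      rw [hxy, if_neg (fun hcc : ℓ = ℓ' ∧ e1 = 2 => hll hcc.1),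
        if_neg (fun hcc : ℓ = ℓ' ∧ e2 = 2 => hll hcc.1)]
      omega
    · -- case 3
      have := hI.hP3 i1 i2 ℓ' hrel
      by_cases hll : ℓ = ℓ'
      · rw [hef hll]; split_ifs <;> omega
      · rw [if_neg (fun hcc : ℓ = ℓ' ∧ e1 = 2 => hll hcc.1),
          if_neg (fun hcc : ℓ = ℓ' ∧ e2 = 2 => hll hcc.1)]
        omega
  · -- P4
    intro J1 J2 ℓ' ℓ'' H1 H2 t1 t2
    obtain ⟨i1, e1, hw1, he1, hl1, hh1⟩ := hw J1
    obtain ⟨i2, e2, hw2, he2, hl2, hh2⟩ := hw J2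
    rw [hw1, hw2] at H1 H2 t1 t2
    rw [aCount_snoc, aCount_snoc] at t1 t2
    rcases ltNode_snoc H1 with ⟨hll, hE1, hE2⟩ | ⟨hll, hxy, hE1, hE2⟩ | ⟨hef, hrel⟩ <;>
      rcases ltNode_snoc H2 with ⟨hll', hF2, hF1⟩ | ⟨hll', hyx, hF2, hF1⟩ | ⟨hef', hrel'⟩
    · omega
    · -- (1,2): v i2 = v i1, ℓ = ℓ', e1 = 2, e2 = 1
      rw [hyx, if_pos (⟨hll, hE1⟩ : ℓ = ℓ' ∧ e1 = 2), if_neg (fun hcc : ℓ = ℓ' ∧ e2 = 2 => by omega)] at t1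
      omega
    · -- (1,3)
      have hll'' : ℓ ≠ ℓ'' := fun hcc => by have := hef' hcc; omega
      rw [if_neg (fun hcc : ℓ = ℓ'' ∧ e1 = 2 => hll'' hcc.1),
        if_neg (fun hcc : ℓ = ℓ'' ∧ e2 = 2 => hll'' hcc.1)] at t2
      have hP5 := hI.hP5 i2 i1 ℓ'' hrel' t2.symm
      rw [if_pos (⟨hll, hE1⟩ : ℓ = ℓ' ∧ e1 = 2), if_neg (fun hcc : ℓ = ℓ' ∧ e2 = 2 => by omega)] at t1
      have hstrict : aCount lab ℓ (v i1) < aCount lab ℓ (v i2) := by rw [hll]; omega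
      have := hI.tot_lt hstrict
      omega
    · -- (2,1): v i1 = v i2, ℓ = ℓ'', e2 = 2, e1 = 1
      rw [hxy, if_pos (⟨hll', hF2⟩ : ℓ = ℓ'' ∧ e2 = 2), if_neg (fun hcc : ℓ = ℓ'' ∧ e1 = 2 => by omega)] at t2
      omega
    · omega
    · -- (2,3): ltNode ℓ'' (v i2) (v i1) with v i2 = v i1
      rw [← hxy] at hrel'
      exact ltNode_irrefl lab ℓ'' (v i1) hrel'
    · -- (3,1): ltNode ℓ' (v i1) (v i2); ℓ = ℓ'', e2 = 2, e1 = 1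
      have hll2 : ℓ ≠ ℓ' := fun hcc => by have := hef hcc; omega
      rw [if_neg (fun hcc : ℓ = ℓ' ∧ e1 = 2 => hll2 hcc.1),
        if_neg (fun hcc : ℓ = ℓ' ∧ e2 = 2 => hll2 hcc.1)] at t1
      have hP5 := hI.hP5 i1 i2 ℓ' hrel t1
      rw [if_pos (⟨hll', hF2⟩ : ℓ = ℓ'' ∧ e2 = 2), if_neg (fun hcc : ℓ = ℓ'' ∧ e1 = 2 => by omega)] at t2
      have hstrict : aCount lab ℓ (v i2) < aCount lab ℓ (v i1) := by rw [hll']; omega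
      have := hI.tot_lt hstrict
      omega
    · -- (3,2)
      rw [hyx] at hrel
      exact ltNode_irrefl lab ℓ' (v i1) hrel
    · -- (3,3)
      have t1' : aCount lab ℓ' (v i1) = aCount lab ℓ' (v i2) := by
        by_cases hll : ℓ = ℓ'
        · rw [hef hll] at t1; split_ifs at t1 <;> omega
        · rw [if_neg (fun hcc : ℓ = ℓ' ∧ e1 = 2 => hll hcc.1),
            if_neg (fun hcc : ℓ = ℓ' ∧ e2 = 2 => hll hcc.1)] at t1
          omega
      have t2' : aCount lab ℓ'' (v i1) = aCount lab ℓ'' (v i2) := by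
        by_cases hll : ℓ = ℓ''
        · rw [hef' hll] at t2; split_ifs at t2 <;> omega
        · rw [if_neg (fun hcc : ℓ = ℓ'' ∧ e1 = 2 => hll hcc.1),
            if_neg (fun hcc : ℓ = ℓ'' ∧ e2 = 2 => hll hcc.1)] at t2
          omega
      exact hI.hP4 i1 i2 ℓ' ℓ'' hrel hrel' t1' t2'
  · -- P5
    intro J1 J2 ℓ' H t
    obtain ⟨i1, e1, hw1, he1, hl1, hh1⟩ := hw J1
    obtain ⟨i2, e2, hw2, he2, hl2, hh2⟩ := hw J2
    rw [hw1, hw2] at H t ⊢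
    rw [aCount_snoc, aCount_snoc] at t
    rw [aTot_snoc, aTot_snoc]
    rcases ltNode_snoc H with ⟨hll, hE1, hE2⟩ | ⟨hll, hxy, hE1, hE2⟩ | ⟨hef, hrel⟩
    · -- case 1
      rw [if_pos (⟨hll, hE1⟩ : ℓ = ℓ' ∧ e1 = 2), if_neg (fun hcc : ℓ = ℓ' ∧ e2 = 2 => by omega)] at t
      have hstrict : aCount lab ℓ (v i1) < aCount lab ℓ (v i2) := by rw [hll]; omega
      have := hI.tot_lt hstrict
      rw [if_pos hE1, if_neg (fun hcc : e2 = 2 => by omega)]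
      omega
    · -- case 2
      rw [hxy, if_neg (fun hcc : e1 = 2 => by omega), if_pos hE2]
      omega
    · -- case 3
      have t' : aCount lab ℓ' (v i1) = aCount lab ℓ' (v i2) := by
        by_cases hll : ℓ = ℓ'
        · rw [hef hll] at t; split_ifs at t <;> omega
        · rw [if_neg (fun hcc : ℓ = ℓ' ∧ e1 = 2 => hll hcc.1),
            if_neg (fun hcc : ℓ = ℓ' ∧ e2 = 2 => hll hcc.1)] at t
          omega
      have hP5 := hI.hP5 i1 i2 ℓ' hrel t'
      by_cases hee : e1 = 2 ∧ e2 = 1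
      · -- the delicate case
        have hle : (i2 : ℕ) ≤ (i1 : ℕ) := by
          have := hl2 hee.2; have := hh1 hee.1; omega
        rcases eq_or_lt_of_le hle with hE | hL
        · exact absurd hrel (heq hE ▸ ltNode_irrefl lab ℓ' (v i1))
        · have hrelL := hs hL
          by_cases htie : aCount lab ℓ (v i2) = aCount lab ℓ (v i1)
          · exact absurd (hI.hP4 i1 i2 ℓ' ℓ hrel hrelL t' htie.symm) not_false
          · have := (hI.hP3 i2 i1 ℓ hrelL).1
            have hstrict : aCount lab ℓ (v i1) < aCount lab ℓ (v i2) := by omega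
            have := hI.tot_lt hstrict
            split_ifs <;> omega
      · split_ifs <;> omega

lemma SPInv.perm {q d : ℕ} {lab : Fin d → ℕ} {u v : Fin (d + 1) → Fin d → ℕ}
    (hI : SPInv q d lab u) (σ : Equiv.Perm (Fin (d + 1))) (hv : ∀ j, v j = u (σ j)) :
    SPInv q d lab v := by
  refine ⟨hI.labRange, ?_, ?_, ?_, ?_, ?_⟩ <;> intro i j <;> rw [hv i, hv j]
  · exact hI.hA (σ i) (σ j)
  · exact hI.hB (σ i) (σ j)
  · exact hI.hP3 (σ i) (σ j)
  · exact hI.hP4 (σ i) (σ j)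
  · exact hI.hP5 (σ i) (σ j)

lemma inv_of_constructible {q d : ℕ} {lab : Fin d → ℕ} {u : Fin (d + 1) → Fin d → ℕ}
    (hR : Constructible q d lab u) : SPInv q d lab u := by
  induction hR with
  | base ℓ₀ h1 hq => exact inv_base ℓ₀ h1 hq
  | step hR ℓ₀ h1 hq v σ hv hsort h hh1 hh2 ih =>
    refine inv_step (ih.perm σ hv) h1 hq hsort h _ (fun j => ?_)
    by_cases hj : (j : ℕ) < h
    · refine ⟨⟨(j : ℕ), by omega⟩, 1, ?_, Or.inl rfl, fun _ => hj, by omega⟩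
      simp only [dif_pos hj]
    · refine ⟨⟨(j : ℕ) - 1, by omega⟩, 2, ?_, Or.inr rfl, by omega, fun _ => by
        simp only; omega⟩
      simp only [dif_neg hj]

lemma key_bounds {q d : ℕ} {lab : Fin d → ℕ} {u : Fin (d + 1) → Fin d → ℕ}
    (hI : SPInv q d lab u) (i j : Fin (d + 1)) (hle : aTot (u i) ≤ aTot (u j))
    {ℓ : ℕ} (hℓ1 : 1 ≤ ℓ) (hℓq : ℓ ≤ q) :
    aCount lab ℓ (u i) ≤ aCount lab ℓ (u j) ∧
    aCount lab ℓ (u j) ≤ aCount lab ℓ (u i) + 1 ∧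
    aTot (u j) ≤ aTot (u i) + q ∧
    (aTot (u j) = aTot (u i) + q → aCount lab ℓ (u j) = aCount lab ℓ (u i) + 1) := by
  have hmono : ∀ ℓ', aCount lab ℓ' (u i) ≤ aCount lab ℓ' (u j) := by
    intro ℓ'
    by_contra hc
    push_neg at hc
    exact absurd (hI.tot_lt hc) (by omega)
  have hmem : ℓ ∈ Finset.Icc 1 q := by simp only [Finset.mem_Icc]; exact ⟨hℓ1, hℓq⟩
  have hsum_i := aTot_eq_sum hI.labRange (u i)
  have hsum_j := aTot_eq_sum hI.labRange (u j)
  have hcard : (Finset.Icc 1 q).card = q := by rw [Nat.card_Icc]; omega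
  have h3 : aTot (u j) ≤ aTot (u i) + q := by
    have hsum : (∑ ℓ' ∈ Finset.Icc 1 q, aCount lab ℓ' (u j)) ≤
        ∑ ℓ' ∈ Finset.Icc 1 q, (aCount lab ℓ' (u i) + 1) :=
      Finset.sum_le_sum (fun ℓ' _ => hI.hA i j ℓ')
    rw [Finset.sum_add_distrib, Finset.sum_const, smul_eq_mul, mul_one, hcard] at hsum
    omega
  refine ⟨hmono ℓ, hI.hA i j ℓ, h3, fun hEq => ?_⟩
  by_contra hne
  have hlt : aCount lab ℓ (u j) < aCount lab ℓ (u i) + 1 := by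
    have := hI.hA i j ℓ; omega
  have : (∑ ℓ' ∈ Finset.Icc 1 q, aCount lab ℓ' (u j)) <
      ∑ ℓ' ∈ Finset.Icc 1 q, (aCount lab ℓ' (u i) + 1) :=
    Finset.sum_lt_sum (fun ℓ' _ => hI.hA i j ℓ') ⟨ℓ, hmem, hlt⟩
  rw [Finset.sum_add_distrib, Finset.sum_const, smul_eq_mul, mul_one, hcard,
    ← hsum_i, ← hsum_j] at this
  omega

lemma final_half {q d : ℕ} (hq : 1 ≤ q) {lab : Fin d → ℕ} {u : Fin (d + 1) → Fin d → ℕ}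
    (hI : SPInv q d lab u) (c : ℚ) (b : Fin (d + 1) → ℤ)
    (hb : ∀ j : Fin (d + 1), b j = ⌈((aTot (u j) : ℚ) + c) / (q : ℚ) - 1 / 2⌉)
    {ℓ : ℕ} (hℓ1 : 1 ≤ ℓ) (hℓq : ℓ ≤ q) (j1 j2 : Fin (d + 1))
    (hle : aTot (u j1) ≤ aTot (u j2)) :
    |((aCount lab ℓ (u j1) : ℤ) - b j1) - ((aCount lab ℓ (u j2) : ℤ) - b j2)| ≤ 1 := by
  obtain ⟨k1, k2, k3, k4⟩ := key_bounds hI j1 j2 hle hℓ1 hℓq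
  have hq0 : (0 : ℚ) < (q : ℚ) := by exact_mod_cast Nat.pos_of_ne_zero (by omega)
  by_cases hD : aTot (u j2) = aTot (u j1) + q
  · -- Δ = q
    have ht2Q : ((aTot (u j2) : ℚ)) = (aTot (u j1) : ℚ) + (q : ℚ) := by
      rw [hD]; push_cast; ring
    have key_eq : ((aTot (u j2) : ℚ) + c) / (q : ℚ) - 1 / 2 =
        (((aTot (u j1) : ℚ) + c) / (q : ℚ) - 1 / 2) + 1 := by
      rw [ht2Q]; field_simp; ring
    have hbb : b j2 = b j1 + 1 := by
      rw [hb j2, hb j1, key_eq, Int.ceil_add_one]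
    have ha := k4 hD
    rw [abs_le]
    omega
  · -- Δ < q
    set Δ : ℕ := aTot (u j2) - aTot (u j1) with hΔ
    have hΔq : Δ ≤ q := by omega
    have ht2Q : ((aTot (u j2) : ℚ)) = (aTot (u j1) : ℚ) + (Δ : ℚ) := by
      have : aTot (u j2) = aTot (u j1) + Δ := by omega
      rw [this]; push_cast; ring
    have key_eq : ((aTot (u j2) : ℚ) + c) / (q : ℚ) - 1 / 2 =
        (((aTot (u j1) : ℚ) + c) / (q : ℚ) - 1 / 2) + (Δ : ℚ) / (q : ℚ) := by
      rw [ht2Q]; field_simp; ring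
    have hlow : b j1 ≤ b j2 := by
      rw [hb j1, hb j2, key_eq]
      exact Int.ceil_le_ceil (le_add_of_nonneg_right (by positivity))
    have hhigh : b j2 ≤ b j1 + 1 := by
      rw [hb j1, hb j2, key_eq, ← Int.ceil_add_one]
      refine Int.ceil_le_ceil ?_
      have : (Δ : ℚ) / (q : ℚ) ≤ 1 := by
        rw [div_le_one hq0]
        exact_mod_cast hΔq
      linarith
    rw [abs_le]
    omega

theorem constructible_ab_diff' {q d : ℕ} (hq : 1 ≤ q)
    {lab : Fin d → ℕ} {u : Fin (d + 1) → Fin d → ℕ}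
    (hR : Constructible q d lab u)
    (c : ℚ) (b : Fin (d + 1) → ℤ)
    (hb : ∀ j : Fin (d + 1), b j = ⌈((aTot (u j) : ℚ) + c) / (q : ℚ) - 1 / 2⌉)
    (ℓ : ℕ) (hℓ1 : 1 ≤ ℓ) (hℓq : ℓ ≤ q) :
    ∀ j₁ j₂ : Fin (d + 1),
      |((aCount lab ℓ (u j₁) : ℤ) - b j₁) - ((aCount lab ℓ (u j₂) : ℤ) - b j₂)| ≤ 1 := by
  intro j₁ j₂
  have hI := inv_of_constructible hR
  rcases le_total (aTot (u j₁)) (aTot (u j₂)) with hle | hle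
  · exact final_half hq hI c b hb hℓ1 hℓq j₁ j₂ hle
  · rw [abs_sub_comm]
    exact final_half hq hI c b hb hℓ1 hℓq j₂ j₁ hle

/-- For a constructible special point data with tuples listed in increasing lexicographic
order and `b_j = ⌈(|a_{u_j}(R)| + c)/q − 1/2⌉`, one has
`|(a^ℓ_{u_{j₁}}(R) − b_{j₁}) − (a^ℓ_{u_{j₂}}(R) − b_{j₂})| ≤ 1` for every node label
`ℓ ∈ {1,…,q}` and all `j₁, j₂`. -/
theorem constructible_ab_diff {q d : ℕ} (hq : 1 ≤ q) (hd : 1 ≤ d)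
    {lab : Fin d → ℕ} {u : Fin (d + 1) → Fin d → ℕ}
    (hR : Constructible q d lab u)
    (hlex : ∀ i j : Fin (d + 1), i < j → lexLt (u i) (u j))
    (c : ℚ) (b : Fin (d + 1) → ℤ)
    (hb : ∀ j : Fin (d + 1), b j = ⌈((aTot (u j) : ℚ) + c) / (q : ℚ) - 1 / 2⌉)
    (ℓ : ℕ) (hℓ1 : 1 ≤ ℓ) (hℓq : ℓ ≤ q) :
    ∀ j₁ j₂ : Fin (d + 1),
      |((aCount lab ℓ (u j₁) : ℤ) - b j₁) - ((aCount lab ℓ (u j₂) : ℤ) - b j₂)| ≤ 1 := by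
  exact constructible_ab_diff' hq hR c b hb ℓ hℓ1 hℓq
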